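/- Let Λ = [[a,b],[c,d]] be a real 2×2 matrix with ad − bc = 1 and b > 0. Then for every Schwartz function f : ℝ → ℂ and every t ∈ ℝ, the inversion formula f(t) = ∫_ℝ (𝓛_Λ f)(ω) · k_Λ(t,ω) dω holds, where the integral converges absolutely. -/

import Mathlib

open MeasureTheory Complex
open scoped FourierTransform Real

noncomputable section

/-- chirp function -/
def chirp (c : ℝ) (x : ℝ) : ℂ := Complex.exp (Complex.I * ((c * x ^ 2 : ℝ) : ℂ))

lemma chirp_norm (c x : ℝ) : ‖chirp c x‖ = 1 := by
  rw [chirp, Complex.norm_exp]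
  have : (Complex.I * ((c * x ^ 2 : ℝ) : ℂ)).re = 0 := by
    simp [Complex.mul_re, ← Complex.ofReal_pow]
  rw [this, Real.exp_zero]

lemma chirp_hasDerivAt (c x : ℝ) :
    HasDerivAt (chirp c) (Complex.I * ((c * (2 * x) : ℝ) : ℂ) * chirp c x) x := by
  have h1 : HasDerivAt (fun x : ℝ => c * x ^ 2) (c * (2 * x)) x := by
    simpa using (hasDerivAt_pow 2 x).const_mul c
  have h2 := (h1.ofReal_comp.const_mul Complex.I).cexp
  have he : chirp c = fun x : ℝ => Complex.exp (Complex.I * ((c * x ^ 2 : ℝ) : ℂ)) := rfl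
  rw [he]
  simpa [mul_comm, mul_assoc, mul_left_comm] using h2

lemma chirp_iteratedDeriv (c : ℝ) (n : ℕ) :
    ∃ p : Polynomial ℂ, ∀ x : ℝ, iteratedDeriv n (chirp c) x = p.eval (x : ℂ) * chirp c x := by
  induction n with
  | zero => exact ⟨1, fun x => by simp⟩
  | succ n ih =>
    obtain ⟨p, hp⟩ := ih
    refine ⟨p.derivative + p * (Polynomial.C (2 * (c : ℂ) * Complex.I) * Polynomial.X),
      fun x => ?_⟩
    rw [iteratedDeriv_succ, funext hp]
    have hd : HasDerivAt (fun x : ℝ => p.eval (x : ℂ) * chirp c x)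
        (p.derivative.eval (x : ℂ) * chirp c x +
          p.eval (x : ℂ) * (Complex.I * ((c * (2 * x) : ℝ) : ℂ) * chirp c x)) x :=
      ((p.hasDerivAt (x : ℂ)).comp_ofReal).mul (chirp_hasDerivAt c x)
    rw [hd.deriv]
    simp only [Polynomial.eval_add, Polynomial.eval_mul, Polynomial.eval_C, Polynomial.eval_X]
    push_cast
    ring

lemma poly_bound (p : Polynomial ℂ) :
    ∃ C : ℝ, ∀ x : ℝ, ‖p.eval (x : ℂ)‖ ≤ C * (1 + ‖x‖) ^ p.natDegree := by
  refine ⟨∑ i ∈ Finset.range (p.natDegree + 1), ‖p.coeff i‖, fun x => ?_⟩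
  rw [Polynomial.eval_eq_sum_range, Finset.sum_mul]
  refine (norm_sum_le _ _).trans (Finset.sum_le_sum fun i hi => ?_)
  rw [norm_mul, norm_pow]
  have hx : ‖(x:ℂ)‖ ^ i ≤ (1 + ‖x‖) ^ p.natDegree := by
    have hxx : ‖(x:ℂ)‖ = ‖x‖ := by simp
    rw [hxx]
    have h2 : i ≤ p.natDegree := by
      have := Finset.mem_range.mp hi; omega
    calc ‖x‖ ^ i ≤ (1 + ‖x‖) ^ i :=
          pow_le_pow_left₀ (norm_nonneg x) (by linarith [norm_nonneg x]) i
      _ ≤ (1 + ‖x‖) ^ p.natDegree :=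
          pow_le_pow_right₀ (by linarith [norm_nonneg x]) h2
  calc ‖p.coeff i‖ * ‖(x:ℂ)‖ ^ i ≤ ‖p.coeff i‖ * (1 + ‖x‖) ^ p.natDegree := by gcongr
    _ = _ := rfl

lemma chirp_temperate (c : ℝ) : Function.HasTemperateGrowth (chirp c) := by
  constructor
  · have : chirp c = Complex.exp ∘ (fun x : ℝ => Complex.I * ((c * x ^ 2 : ℝ) : ℂ)) := rfl
    rw [this]
    exact Complex.contDiff_exp.comp
      (contDiff_const.mul (Complex.ofRealCLM.contDiff.comp (contDiff_const.mul (contDiff_id.pow 2))))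
  · intro n
    obtain ⟨p, hp⟩ := chirp_iteratedDeriv c n
    obtain ⟨C, hC⟩ := poly_bound p
    refine ⟨p.natDegree, C, fun x => ?_⟩
    rw [norm_iteratedFDeriv_eq_norm_iteratedDeriv, hp x, norm_mul, chirp_norm, mul_one]
    exact hC x

/-- The LCT kernel `k_Λ(t, ω) = (1/√(-2πib)) exp(-(i/(2b))(a t² + d ω² - 2 ω t))`,
where `√` is the principal branch of the complex square root. -/
def lctKernel (a b d : ℝ) (t ω : ℝ) : ℂ :=
  (((-2 : ℂ) * (Real.pi : ℂ) * Complex.I * (b : ℂ)) ^ ((1 : ℂ) / 2))⁻¹ *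
    Complex.exp (-(Complex.I / (2 * (b : ℂ))) *
      ((a : ℂ) * (t : ℂ) ^ 2 + (d : ℂ) * (ω : ℂ) ^ 2 - 2 * (ω : ℂ) * (t : ℂ)))

/-- The Linear Canonical Transform `(𝓛_Λ f)(ω) = ∫ f(t) conj (k_Λ(t,ω)) dt`. -/
def lct (a b d : ℝ) (f : ℝ → ℂ) (ω : ℝ) : ℂ :=
  ∫ t : ℝ, f t * (starRingEnd ℂ) (lctKernel a b d t ω)

/-- **LCT inversion formula.**  For `Λ = [[a,b],[c,d]]` with `ad - bc = 1` and `b > 0`,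
every Schwartz function satisfies `f(t) = ∫ (𝓛_Λ f)(ω) k_Λ(t,ω) dω`, the integral
converging absolutely. -/
theorem lct_inversion (a b c d : ℝ) (hdet : a * d - b * c = 1) (hb : 0 < b)
    (f : SchwartzMap ℝ ℂ) (t : ℝ) :
    Integrable (fun ω : ℝ => lct a b d (fun x => f x) ω * lctKernel a b d t ω) ∧
    f t = ∫ ω : ℝ, lct a b d (fun x => f x) ω * lctKernel a b d t ω := by
  have hbne : (b : ℂ) ≠ 0 := Complex.ofReal_ne_zero.mpr hb.ne'
  have hπ : (0:ℝ) < π := Real.pi_pos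
  have hπc : (π : ℂ) ≠ 0 := Complex.ofReal_ne_zero.mpr hπ.ne'
  have h2πb : (0:ℝ) < 2 * π * b := by positivity
  set c₀ : ℂ := ((-2 : ℂ) * (Real.pi : ℂ) * Complex.I * (b : ℂ)) ^ ((1 : ℂ) / 2) with hc₀
  have hnormSq : Complex.normSq c₀ = 2 * π * b := by
    have habs0 : ‖((-2 : ℂ) * (Real.pi : ℂ) * Complex.I * (b : ℂ))‖ = 2 * π * b := by
      simp [abs_of_pos hπ, abs_of_pos hb]
    have habs : ‖c₀‖ = (2 * π * b) ^ ((1:ℝ)/2) := by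
      rw [hc₀, show ((1 : ℂ)/2) = (((1:ℝ)/2 : ℝ) : ℂ) by norm_num,
        Complex.norm_cpow_real, habs0]
    rw [← Complex.sq_norm, habs, ← Real.rpow_natCast _ 2, ← Real.rpow_mul h2πb.le]
    norm_num
  -- the Schwartz function g = f * chirp
  set g : SchwartzMap ℝ ℂ :=
    SchwartzMap.bilinLeftCLM (ContinuousLinearMap.mul ℝ ℂ) (chirp_temperate (a/(2*b))) f
    with hgdef
  have hg : ∀ x : ℝ, g x = f x * chirp (a/(2*b)) x := fun x => rfl
  have hFg : Integrable (𝓕 (⇑g)) := by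
    rw [← SchwartzMap.fourier_coe]
    exact (𝓕 g).integrable
  -- key pointwise identity for the forward transform
  have key1 : ∀ (ω t' : ℝ), f t' * (starRingEnd ℂ) (lctKernel a b d t' ω)
      = ((starRingEnd ℂ) c₀⁻¹ * Complex.exp (Complex.I * d * ω^2 / (2*b))) *
        (Complex.exp (((-2*π*t'*(ω/(2*π*b)) : ℝ) : ℂ) * Complex.I) • g t') := by
    intro ω t'
    have hconj : (starRingEnd ℂ) (lctKernel a b d t' ω) =
        (starRingEnd ℂ) c₀⁻¹ *
          Complex.exp ((Complex.I/(2*(b:ℂ))) *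
            ((a:ℂ)*(t':ℂ)^2 + (d:ℂ)*(ω:ℂ)^2 - 2*(ω:ℂ)*(t':ℂ))) := by
      rw [lctKernel, ← hc₀, map_mul, ← Complex.exp_conj]
      congr 2
      simp only [map_mul, map_sub, map_add, map_div₀, map_neg, Complex.conj_I, map_pow,
        map_ofNat, Complex.conj_ofReal]
      ring
    rw [hconj, hg, chirp, smul_eq_mul]
    rw [show ((Complex.I/(2*(b:ℂ))) * ((a:ℂ)*(t':ℂ)^2 + (d:ℂ)*(ω:ℂ)^2 - 2*(ω:ℂ)*(t':ℂ)))
        = (Complex.I * d * ω^2 / (2*b)) + ((((-2*π*t'*(ω/(2*π*b)) : ℝ) : ℂ) * Complex.I)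
            + Complex.I * ((a/(2*b) * t'^2 : ℝ) : ℂ)) by
      push_cast
      have h3 : -2*(π:ℂ)*(t':ℂ)*((ω:ℂ)/(2*(π:ℂ)*(b:ℂ))) = -((t':ℂ)*(ω:ℂ)/(b:ℂ)) := by
        field_simp
      rw [h3]
      field_simp
      ring]
    rw [Complex.exp_add, Complex.exp_add]
    ring
  -- the forward transform in terms of the Fourier transform of g
  have key2 : ∀ ω : ℝ, lct a b d (fun x => f x) ω
      = ((starRingEnd ℂ) c₀⁻¹ * Complex.exp (Complex.I * d * ω^2 / (2*b))) *
        𝓕 (⇑g) (ω/(2*π*b)) := by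
    intro ω
    unfold lct
    simp only [key1]
    rw [MeasureTheory.integral_const_mul, ← Real.fourier_real_eq_integral_exp_smul]
  -- conjugate constant squared
  have hcc : (starRingEnd ℂ) c₀⁻¹ * c₀⁻¹ = (((Complex.normSq c₀)⁻¹ : ℝ) : ℂ) := by
    rw [mul_comm, Complex.mul_conj, map_inv₀]
  -- pointwise identity for the inverse integrand
  have key3 : ∀ ω : ℝ, lct a b d (fun x => f x) ω * lctKernel a b d t ω
      = ((((Complex.normSq c₀)⁻¹ : ℝ) : ℂ) *
          Complex.exp (-(Complex.I * a * t^2 / (2*b)))) *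
        (Complex.exp (((-2*π*(ω/(2*π*b))*(-t) : ℝ) : ℂ) * Complex.I) *
          𝓕 (⇑g) (ω/(2*π*b))) := by
    intro ω
    have hE : Complex.exp (Complex.I * d * ω^2 / (2*b)) *
        Complex.exp (-(Complex.I / (2 * (b:ℂ))) *
          ((a:ℂ)*(t:ℂ)^2 + (d:ℂ)*(ω:ℂ)^2 - 2*(ω:ℂ)*(t:ℂ)))
        = Complex.exp (-(Complex.I * a * t^2 / (2*b))) *
          Complex.exp (((-2*π*(ω/(2*π*b))*(-t) : ℝ) : ℂ) * Complex.I) := by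
      rw [← Complex.exp_add, ← Complex.exp_add]
      congr 1
      push_cast
      have h3 : -2*(π:ℂ)*((ω:ℂ)/(2*(π:ℂ)*(b:ℂ)))*(-(t:ℂ)) = (t:ℂ)*(ω:ℂ)/(b:ℂ) := by
        field_simp
      rw [h3]
      field_simp
      ring
    rw [key2, lctKernel, ← hc₀]
    linear_combination (𝓕 (⇑g) (ω/(2*π*b)) * Complex.exp (Complex.I * d * ω^2 / (2*b)) *
        Complex.exp (-(Complex.I / (2 * (b:ℂ))) *
          ((a:ℂ)*(t:ℂ)^2 + (d:ℂ)*(ω:ℂ)^2 - 2*(ω:ℂ)*(t:ℂ)))) * hcc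
      + ((((Complex.normSq c₀)⁻¹ : ℝ) : ℂ) * 𝓕 (⇑g) (ω/(2*π*b))) * hE
  -- integrability
  have hHcont : Continuous fun v : ℝ =>
      Complex.exp (((-2*π*v*(-t) : ℝ) : ℂ) * Complex.I) := by
    apply Complex.continuous_exp.comp
    exact (Complex.continuous_ofReal.comp (by continuity)).mul continuous_const
  have hH : Integrable (fun v : ℝ =>
      Complex.exp (((-2*π*v*(-t) : ℝ) : ℂ) * Complex.I) * 𝓕 (⇑g) v) :=
    hFg.bdd_mul hHcont.aestronglyMeasurable
      (c := 1) (Filter.Eventually.of_forall fun v => le_of_eq (by rw [Complex.norm_exp_ofReal_mul_I]))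
  have hHcomp : Integrable (fun ω : ℝ =>
      Complex.exp (((-2*π*(ω/(2*π*b))*(-t) : ℝ) : ℂ) * Complex.I) * 𝓕 (⇑g) (ω/(2*π*b))) :=
    hH.comp_div h2πb.ne'
  have heq : (fun ω : ℝ => lct a b d (fun x => f x) ω * lctKernel a b d t ω)
      = fun ω : ℝ => ((((Complex.normSq c₀)⁻¹ : ℝ) : ℂ) *
          Complex.exp (-(Complex.I * a * t^2 / (2*b)))) *
        (Complex.exp (((-2*π*(ω/(2*π*b))*(-t) : ℝ) : ℂ) * Complex.I) *
          𝓕 (⇑g) (ω/(2*π*b))) := funext key3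
  have hint : Integrable (fun ω : ℝ => lct a b d (fun x => f x) ω * lctKernel a b d t ω) := by
    rw [heq]
    exact hHcomp.const_mul _
  refine ⟨hint, ?_⟩
  -- Fourier inversion
  have hinv : (∫ v : ℝ, Complex.exp (((-2*π*v*(-t) : ℝ) : ℂ) * Complex.I) * 𝓕 (⇑g) v)
      = g t := by
    have h1 := Real.fourier_real_eq_integral_exp_smul (𝓕 (⇑g)) (-t)
    simp only [smul_eq_mul] at h1
    have h2 := Continuous.fourierInv_fourier_eq g.continuous g.integrable hFg
    have h3 := congrFun h2 t
    rw [Real.fourierInv_eq_fourier_neg] at h3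
    rw [← h1, h3]
  -- change of variables
  have hcd := MeasureTheory.Measure.integral_comp_div (fun v : ℝ =>
      Complex.exp (((-2*π*v*(-t) : ℝ) : ℂ) * Complex.I) * 𝓕 (⇑g) v) (2*π*b)
  rw [abs_of_pos h2πb] at hcd
  have hval : (∫ ω : ℝ, lct a b d (fun x => f x) ω * lctKernel a b d t ω)
      = ((((Complex.normSq c₀)⁻¹ : ℝ) : ℂ) *
          Complex.exp (-(Complex.I * a * t^2 / (2*b)))) * ((2*π*b : ℝ) • g t) := by
    calc (∫ ω : ℝ, lct a b d (fun x => f x) ω * lctKernel a b d t ω)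
        = ∫ ω : ℝ, ((((Complex.normSq c₀)⁻¹ : ℝ) : ℂ) *
            Complex.exp (-(Complex.I * a * t^2 / (2*b)))) *
          (Complex.exp (((-2*π*(ω/(2*π*b))*(-t) : ℝ) : ℂ) * Complex.I) *
            𝓕 (⇑g) (ω/(2*π*b))) := by rw [heq]
      _ = ((((Complex.normSq c₀)⁻¹ : ℝ) : ℂ) *
            Complex.exp (-(Complex.I * a * t^2 / (2*b)))) *
          ∫ ω : ℝ, Complex.exp (((-2*π*(ω/(2*π*b))*(-t) : ℝ) : ℂ) * Complex.I) *
            𝓕 (⇑g) (ω/(2*π*b)) := MeasureTheory.integral_const_mul _ _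
      _ = ((((Complex.normSq c₀)⁻¹ : ℝ) : ℂ) *
            Complex.exp (-(Complex.I * a * t^2 / (2*b)))) *
          ((2*π*b : ℝ) • ∫ v : ℝ, Complex.exp (((-2*π*v*(-t) : ℝ) : ℂ) * Complex.I) *
            𝓕 (⇑g) v) := congrArg _ hcd
      _ = _ := by rw [hinv]
  rw [hval, hnormSq, hg t, chirp, Complex.real_smul]
  have hexp2 : Complex.exp (-(Complex.I * (a:ℂ) * (t:ℂ)^2 / (2*(b:ℂ)))) *
      Complex.exp (Complex.I * ((a/(2*b) * t^2 : ℝ) : ℂ)) = 1 := by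
    rw [← Complex.exp_add, show -(Complex.I * (a:ℂ) * (t:ℂ)^2 / (2*(b:ℂ)))
        + Complex.I * ((a/(2*b) * t^2 : ℝ) : ℂ) = 0 by push_cast; field_simp; ring,
      Complex.exp_zero]
  have hcast : (((2*π*b)⁻¹ : ℝ) : ℂ) * ((2*π*b : ℝ) : ℂ) = 1 := by
    push_cast
    field_simp
  linear_combination (-((f t : ℂ) * Complex.exp (-(Complex.I * (a:ℂ) * (t:ℂ)^2 / (2*(b:ℂ)))) *
      Complex.exp (Complex.I * ((a/(2*b) * t^2 : ℝ) : ℂ)))) * hcast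
    + (-(f t : ℂ)) * hexp2
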